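/- If X ∈ A^ω is μ-normal and Y ∈ B^ω is drawn at random according to the Bernoulli measure ν on B (i.e., Y(0), Y(1), … are i.i.d. with distribution ν), then ν-almost surely the joined sequence X ⊗ Y, defined by (X ⊗ Y)(n) = (X(n), Y(n)), is (μ ⊗ ν)-normal over the alphabet A × B. -/

import Mathlib

open Filter Topology

/-- The prefix `X(0) X(1) ⋯ X(n-1)` of an infinite sequence, as a list. -/
def pref {A : Type*} (X : ℕ → A) (n : ℕ) : List A := (List.range n).map X

/-- Number of occurrences of the word `w` in the prefix `X[0..n]`
(indices `i` with `0 ≤ i ≤ n - |w| + 1`). -/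
def nbocc {A : Type*} [DecidableEq A] (w : List A) (X : ℕ → A) (n : ℕ) : ℕ :=
  ((Finset.range (n + 2 - w.length)).filter
    (fun i => (List.range w.length).map (fun j => X (i + j)) = w)).card

/-- Frequency of occurrences of `w` in `X[0..n]`. -/
noncomputable def freq {A : Type*} [DecidableEq A] (w : List A) (X : ℕ → A) (n : ℕ) : ℝ :=
  (nbocc w X n : ℝ) / ((n + 2 - w.length : ℕ) : ℝ)

/-- The Bernoulli measure of a word: product of the measures of its letters. -/
def wmeas {A : Type*} (μ : A → ℝ) (w : List A) : ℝ := (w.map μ).prod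

/-- `X` is `μ`-normal: every nonempty word occurs with asymptotic frequency `μ(w)`. -/
def BNormal {A : Type*} [DecidableEq A] (μ : A → ℝ) (X : ℕ → A) : Prop :=
  ∀ w : List A, w ≠ [] → Tendsto (fun n => freq w X n) atTop (𝓝 (wmeas μ w))

/-- Iterated transition function of a deterministic automaton. -/
def dstar {Q A : Type*} (δ : Q → A → Q) (q : Q) (w : List A) : Q := w.foldl δ q

/-- Capital of an automatic gambler started in state `q` after reading `w`. -/
def capital {Q A : Type*} (δ : Q → A → Q) (γ : Q → A → ℝ) : Q → List A → ℝ
  | _, [] => 1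
  | q, a :: w => γ q a * capital δ γ (δ q a) w

open MeasureTheory

set_option linter.unusedSectionVars false
set_option linter.unusedVariables false
set_option maxHeartbeats 2000000
namespace RJN
variable {B : Type*} [Fintype B] [DecidableEq B]

/-- Extension of a finite tuple to an infinite sequence. -/
def extFn (b₀ : B) (L : ℕ) (v : Fin L → B) : ℕ → B := fun n => if h : n < L then v ⟨n, h⟩ else b₀

def DependsOn' (f : (ℕ → B) → ℝ) (s : Set ℕ) : Prop :=
  ∀ Y Y' : ℕ → B, (∀ i ∈ s, Y i = Y' i) → f Y = f Y'

lemma DependsOn'.mono {f : (ℕ → B) → ℝ} {s t : Set ℕ} (h : DependsOn' f s) (hst : s ⊆ t) :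
    DependsOn' f t := fun Y Y' hy => h Y Y' (fun i hi => hy i (hst hi))

lemma DependsOn'.mul {f g : (ℕ → B) → ℝ} {s : Set ℕ} (hf : DependsOn' f s) (hg : DependsOn' g s) :
    DependsOn' (fun Y => f Y * g Y) s := fun Y Y' hy => by simp only; rw [hf Y Y' hy, hg Y Y' hy]

/-- Expectation of a local function w.r.t. the Bernoulli weights on the first `L` coordinates. -/
noncomputable def EL (ν : B → ℝ) (b₀ : B) (L : ℕ) (f : (ℕ → B) → ℝ) : ℝ :=
  ∑ v : Fin L → B, (∏ j, ν (v j)) * f (extFn b₀ L v)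

variable {ν : B → ℝ}

lemma sum_prod_nu_eq_one (hν1 : ∑ b, ν b = 1) (ι : Type*) [Fintype ι] [DecidableEq ι] :
    ∑ v : ι → B, ∏ i, ν (v i) = 1 := by
  have h := Finset.prod_univ_sum (fun _ : ι => (Finset.univ : Finset B)) (fun _ b => ν b)
  rw [Fintype.piFinset_univ] at h
  rw [← h]
  simp [hν1]

lemma EL_const (hν1 : ∑ b, ν b = 1) (b₀ : B) (L : ℕ) (c : ℝ) :
    EL ν b₀ L (fun _ => c) = c := by
  unfold EL
  rw [← Finset.sum_mul, sum_prod_nu_eq_one hν1, one_mul]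

lemma EL_congr {b₀ : B} {L : ℕ} {f g : (ℕ → B) → ℝ} (h : ∀ Y, f Y = g Y) :
    EL ν b₀ L f = EL ν b₀ L g := by
  unfold EL; exact Finset.sum_congr rfl (fun v _ => by rw [h])

lemma EL_add (b₀ : B) (L : ℕ) (f g : (ℕ → B) → ℝ) :
    EL ν b₀ L (fun Y => f Y + g Y) = EL ν b₀ L f + EL ν b₀ L g := by
  unfold EL; rw [← Finset.sum_add_distrib]; exact Finset.sum_congr rfl (fun v _ => by ring)

lemma EL_smul (b₀ : B) (L : ℕ) (c : ℝ) (f : (ℕ → B) → ℝ) :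
    EL ν b₀ L (fun Y => c * f Y) = c * EL ν b₀ L f := by
  unfold EL; rw [Finset.mul_sum]; exact Finset.sum_congr rfl (fun v _ => by ring)

lemma EL_sum (b₀ : B) (L : ℕ) {ι : Type*} (s : Finset ι) (F : ι → (ℕ → B) → ℝ) :
    EL ν b₀ L (fun Y => ∑ i ∈ s, F i Y) = ∑ i ∈ s, EL ν b₀ L (F i) := by
  unfold EL
  rw [Finset.sum_comm]
  exact Finset.sum_congr rfl (fun v _ => by rw [Finset.mul_sum])

lemma EL_abs_le (hνpos : ∀ b, 0 < ν b) (hν1 : ∑ b, ν b = 1) (b₀ : B) (L : ℕ)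
    {f : (ℕ → B) → ℝ} {C : ℝ} (hf : ∀ Y, |f Y| ≤ C) : |EL ν b₀ L f| ≤ C := by
  unfold EL
  calc |∑ v : Fin L → B, (∏ j, ν (v j)) * f (extFn b₀ L v)|
      ≤ ∑ v : Fin L → B, |(∏ j, ν (v j)) * f (extFn b₀ L v)| := Finset.abs_sum_le_sum_abs _ _
    _ ≤ ∑ v : Fin L → B, (∏ j, ν (v j)) * C := by
        apply Finset.sum_le_sum
        intro v _
        rw [abs_mul, abs_of_nonneg (Finset.prod_nonneg (fun j _ => (hνpos _).le))]
        exact mul_le_mul_of_nonneg_left (hf _) (Finset.prod_nonneg (fun j _ => (hνpos _).le))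
    _ = C := by rw [← Finset.sum_mul, sum_prod_nu_eq_one hν1, one_mul]

lemma EL_nonneg (hνpos : ∀ b, 0 < ν b) (b₀ : B) (L : ℕ)
    {f : (ℕ → B) → ℝ} (hf : ∀ Y, 0 ≤ f Y) : 0 ≤ EL ν b₀ L f :=
  Finset.sum_nonneg (fun v _ => mul_nonneg (Finset.prod_nonneg (fun j _ => (hνpos _).le)) (hf _))

lemma EL_mono (hνpos : ∀ b, 0 < ν b) (b₀ : B) (L : ℕ)
    {f g : (ℕ → B) → ℝ} (hf : ∀ Y, f Y ≤ g Y) : EL ν b₀ L f ≤ EL ν b₀ L g :=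
  Finset.sum_le_sum (fun v _ => mul_le_mul_of_nonneg_left (hf _)
    (Finset.prod_nonneg (fun j _ => (hνpos _).le)))

/-- Helper: a product over a finset of naturals below `L`, rewritten over `Fin L`. -/
lemma prod_fin_ite {L : ℕ} (s : Finset ℕ) (hs : ∀ j ∈ s, j < L) (F : ℕ → ℝ) :
    (∏ j : Fin L, if (j : ℕ) ∈ s then F j else 1) = ∏ j ∈ s, F j := by
  rw [Fin.prod_univ_eq_prod_range (fun j => if j ∈ s then F j else 1) L]
  rw [← Finset.prod_filter]
  apply Finset.prod_congr _ (fun _ _ => rfl)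
  ext j
  simp only [Finset.mem_filter, Finset.mem_range]
  exact ⟨fun h => h.2, fun h => ⟨hs j h, h⟩⟩

/-- Expectation of a product of single-coordinate functions factorizes. -/
lemma EL_prod_single (hν1 : ∑ b, ν b = 1) (b₀ : B) (L : ℕ) (s : Finset ℕ)
    (hs : ∀ j ∈ s, j < L) (g : ℕ → B → ℝ) :
    EL ν b₀ L (fun Y => ∏ j ∈ s, g j (Y j)) = ∏ j ∈ s, ∑ b, ν b * g j b := by
  unfold EL
  have key : ∀ v : Fin L → B,
      (∏ j, ν (v j)) * (∏ j ∈ s, g j (extFn b₀ L v j))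
        = ∏ j : Fin L, (ν (v j) * (if (j : ℕ) ∈ s then g j (v j) else 1)) := by
    intro v
    rw [Finset.prod_mul_distrib]
    congr 1
    rw [← prod_fin_ite s hs (fun j => g j (extFn b₀ L v j))]
    apply Finset.prod_congr rfl
    intro j _
    by_cases h : (j : ℕ) ∈ s
    · simp only [h, if_true, extFn, j.isLt, dif_pos]
    · simp [h]
  calc ∑ v : Fin L → B, (∏ j, ν (v j)) * (∏ j ∈ s, g j (extFn b₀ L v j))
      = ∑ v : Fin L → B, ∏ j : Fin L, (ν (v j) * (if (j : ℕ) ∈ s then g j (v j) else 1)) :=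
        Finset.sum_congr rfl (fun v _ => key v)
    _ = ∏ j : Fin L, ∑ b, ν b * (if (j : ℕ) ∈ s then g j b else 1) := by
        have h := Finset.prod_univ_sum (fun _ : Fin L => (Finset.univ : Finset B))
          (fun j b => ν b * (if (j : ℕ) ∈ s then g j b else 1))
        rw [Fintype.piFinset_univ] at h
        rw [← h]
    _ = ∏ j : Fin L, (if (j : ℕ) ∈ s then ∑ b, ν b * g j b else 1) := by
        apply Finset.prod_congr rfl
        intro j _
        by_cases h : (j : ℕ) ∈ s
        · simp [h]
        · simp [h, hν1]
    _ = ∏ j ∈ s, ∑ b, ν b * g j b := prod_fin_ite s hs (fun j => ∑ b, ν b * g j b)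

/-- Factorization over independent coordinates. -/
lemma EL_mul_indep (hν1 : ∑ b, ν b = 1) (b₀ : B) (L : ℕ) (f g : (ℕ → B) → ℝ)
    (s : Set ℕ) [DecidablePred (· ∈ s)] (hf : DependsOn' f s) (hg : DependsOn' g sᶜ) :
    EL ν b₀ L (fun Y => f Y * g Y) = EL ν b₀ L f * EL ν b₀ L g := by
  classical
  set p : Fin L → Prop := fun j => (j : ℕ) ∈ s with hp
  set e := (Equiv.piEquivPiSubtypeProd p (fun _ => B)).symm with he
  have hext : ∀ (x : {j : Fin L // p j} → B) (y y' : {j : Fin L // ¬ p j} → B),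
      ∀ i ∈ s, extFn b₀ L (e (x, y)) i = extFn b₀ L (e (x, y')) i := by
    intro x y y' i hi
    unfold extFn
    by_cases h : i < L
    · simp only [dif_pos h]
      have hpi : p ⟨i, h⟩ := hi
      simp [he, Equiv.piEquivPiSubtypeProd_symm_apply, hpi]
    · simp [dif_neg h]
  have hext' : ∀ (x x' : {j : Fin L // p j} → B) (y : {j : Fin L // ¬ p j} → B),
      ∀ i ∈ sᶜ, extFn b₀ L (e (x, y)) i = extFn b₀ L (e (x', y)) i := by
    intro x x' y i hi
    unfold extFn
    by_cases h : i < L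
    · simp only [dif_pos h]
      have hpi : ¬ p ⟨i, h⟩ := hi
      simp [he, Equiv.piEquivPiSubtypeProd_symm_apply, hpi]
    · simp [dif_neg h]
  have hrho : ∀ (x : {j : Fin L // p j} → B) (y : {j : Fin L // ¬ p j} → B),
      (∏ j, ν (e (x, y) j)) = (∏ j, ν (x j)) * ∏ j, ν (y j) := by
    intro x y
    have : ∀ j : Fin L, ν (e (x, y) j)
        = if h : p j then ν (x ⟨j, h⟩) else ν (y ⟨j, h⟩) := by
      intro j
      by_cases h : p j <;> simp [he, Equiv.piEquivPiSubtypeProd_symm_apply, h]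
    rw [Finset.prod_congr rfl (fun j _ => this j)]
    exact Fintype.prod_dite _ _
  have expandE : ∀ h : (ℕ → B) → ℝ, EL ν b₀ L h
      = ∑ x : {j : Fin L // p j} → B, ∑ y : {j : Fin L // ¬ p j} → B,
          ((∏ j, ν (x j)) * ∏ j, ν (y j)) * h (extFn b₀ L (e (x, y))) := by
    intro h
    unfold EL
    rw [← Equiv.sum_comp e (fun v => (∏ j, ν (v j)) * h (extFn b₀ L v)), Fintype.sum_prod_type]
    exact Finset.sum_congr rfl (fun x _ => Finset.sum_congr rfl (fun y _ => by rw [hrho]))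
  set y₀ : {j : Fin L // ¬ p j} → B := fun _ => b₀ with hy₀
  set x₀ : {j : Fin L // p j} → B := fun _ => b₀ with hx₀
  have hfval : ∀ x y, f (extFn b₀ L (e (x, y))) = f (extFn b₀ L (e (x, y₀))) :=
    fun x y => hf _ _ (fun i hi => hext x y y₀ i hi)
  have hgval : ∀ x y, g (extFn b₀ L (e (x, y))) = g (extFn b₀ L (e (x₀, y))) :=
    fun x y => hg _ _ (fun i hi => hext' x x₀ y i hi)
  have sum1 : ∑ y : {j : Fin L // ¬ p j} → B, ∏ j, ν (y j) = 1 := sum_prod_nu_eq_one hν1 _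
  have sum1' : ∑ x : {j : Fin L // p j} → B, ∏ j, ν (x j) = 1 := sum_prod_nu_eq_one hν1 _
  have hA : EL ν b₀ L f
      = ∑ x : {j : Fin L // p j} → B, (∏ j, ν (x j)) * f (extFn b₀ L (e (x, y₀))) := by
    rw [expandE f]
    have step1 : ∀ x : {j : Fin L // p j} → B,
        (∑ y : {j : Fin L // ¬ p j} → B,
          ((∏ j, ν (x j)) * ∏ j, ν (y j)) * f (extFn b₀ L (e (x, y))))
        = (∏ j, ν (x j)) * f (extFn b₀ L (e (x, y₀))) := by
      intro x
      have : ∀ y : {j : Fin L // ¬ p j} → B,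
          ((∏ j, ν (x j)) * ∏ j, ν (y j)) * f (extFn b₀ L (e (x, y)))
          = (∏ j, ν (y j)) * ((∏ j, ν (x j)) * f (extFn b₀ L (e (x, y₀)))) := by
        intro y; rw [hfval x y]; ring
      rw [Finset.sum_congr rfl (fun y _ => this y), ← Finset.sum_mul, sum1, one_mul]
    exact Finset.sum_congr rfl (fun x _ => step1 x)
  have hB : EL ν b₀ L g
      = ∑ y : {j : Fin L // ¬ p j} → B, (∏ j, ν (y j)) * g (extFn b₀ L (e (x₀, y))) := by
    rw [expandE g]
    have step1 : ∀ x : {j : Fin L // p j} → B,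
        (∑ y : {j : Fin L // ¬ p j} → B,
          ((∏ j, ν (x j)) * ∏ j, ν (y j)) * g (extFn b₀ L (e (x, y))))
        = (∏ j, ν (x j)) * ∑ y : {j : Fin L // ¬ p j} → B,
            (∏ j, ν (y j)) * g (extFn b₀ L (e (x₀, y))) := by
      intro x
      rw [Finset.mul_sum]
      refine Finset.sum_congr rfl (fun y _ => ?_)
      rw [hgval x y]; ring
    rw [Finset.sum_congr rfl (fun x _ => step1 x), ← Finset.sum_mul, sum1', one_mul]
  rw [expandE (fun Y => f Y * g Y), hA, hB, Finset.sum_mul_sum]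
  refine Finset.sum_congr rfl (fun x _ => Finset.sum_congr rfl (fun y _ => ?_))
  show ((∏ j, ν (x j)) * ∏ j, ν (y j)) * (f (extFn b₀ L (e (x, y))) * g (extFn b₀ L (e (x, y))))
      = ((∏ j, ν (x j)) * f (extFn b₀ L (e (x, y₀)))) * ((∏ j, ν (y j)) * g (extFn b₀ L (e (x₀, y))))
  rw [hfval x y, hgval x y]; ring

lemma pref_eq_ofFn (Y : ℕ → B) (L : ℕ) : pref Y L = List.ofFn (fun j : Fin L => Y j) := by
  apply List.ext_getElem
  · simp [pref]
  · intro n h1 h2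
    simp [pref]

/-- The measure of a finite-horizon event, computed from the cylinder values. -/
lemma measure_event (hνpos : ∀ b, 0 < ν b) (hν1 : ∑ b, ν b = 1)
    [MeasurableSpace B] (P : Measure (ℕ → B)) [IsProbabilityMeasure P]
    (hP : ∀ v : List B, P {Y | pref Y v.length = v} = ENNReal.ofReal (wmeas ν v))
    (L : ℕ) (V : Finset (Fin L → B)) :
    P {Y : ℕ → B | (fun j : Fin L => Y j) ∈ V} = ENNReal.ofReal (∑ v ∈ V, ∏ j, ν (v j)) := by
  classical
  have hcyl : ∀ v : Fin L → B,
      P {Y : ℕ → B | (fun j : Fin L => Y j) = v} = ENNReal.ofReal (∏ j, ν (v j)) := by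
    intro v
    have h := hP (List.ofFn v)
    rw [List.length_ofFn] at h
    have hs : {Y : ℕ → B | pref Y L = List.ofFn v} = {Y : ℕ → B | (fun j : Fin L => Y j) = v} := by
      ext Y
      simp only [Set.mem_setOf_eq, pref_eq_ofFn, List.ofFn_inj]
    have hw : wmeas ν (List.ofFn v) = ∏ j, ν (v j) := by
      unfold wmeas
      rw [List.map_ofFn, List.prod_ofFn]
      rfl
    rw [hs, hw] at h
    exact h
  have hnn : ∀ v : Fin L → B, (0:ℝ) ≤ ∏ j, ν (v j) :=
    fun v => Finset.prod_nonneg (fun j _ => (hνpos _).le)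
  have hunion : ∀ W : Finset (Fin L → B),
      {Y : ℕ → B | (fun j : Fin L => Y j) ∈ W}
        = ⋃ v ∈ W, {Y : ℕ → B | (fun j : Fin L => Y j) = v} := by
    intro W; ext Y; simp
  have hle : ∀ W : Finset (Fin L → B),
      P {Y : ℕ → B | (fun j : Fin L => Y j) ∈ W} ≤ ENNReal.ofReal (∑ v ∈ W, ∏ j, ν (v j)) := by
    intro W
    rw [hunion W]
    calc P (⋃ v ∈ W, {Y : ℕ → B | (fun j : Fin L => Y j) = v})
        ≤ ∑ v ∈ W, P {Y : ℕ → B | (fun j : Fin L => Y j) = v} :=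
          measure_biUnion_finset_le W _
      _ = ∑ v ∈ W, ENNReal.ofReal (∏ j, ν (v j)) :=
          Finset.sum_congr rfl (fun v _ => hcyl v)
      _ = ENNReal.ofReal (∑ v ∈ W, ∏ j, ν (v j)) :=
          (ENNReal.ofReal_sum_of_nonneg (fun v _ => hnn v)).symm
  have hcompl : {Y : ℕ → B | (fun j : Fin L => Y j) ∈ V}ᶜ
      = {Y : ℕ → B | (fun j : Fin L => Y j) ∈ Vᶜ} := by
    ext Y; simp
  have hsum : (∑ v ∈ V, ∏ j, ν (v j)) + (∑ v ∈ Vᶜ, ∏ j, ν (v j)) = 1 := by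
    rw [Finset.sum_add_sum_compl]
    exact sum_prod_nu_eq_one hν1 (Fin L)
  set a := P {Y : ℕ → B | (fun j : Fin L => Y j) ∈ V} with ha
  set b := P {Y : ℕ → B | (fun j : Fin L => Y j) ∈ Vᶜ} with hb
  set x := ENNReal.ofReal (∑ v ∈ V, ∏ j, ν (v j)) with hx
  set y := ENNReal.ofReal (∑ v ∈ Vᶜ, ∏ j, ν (v j)) with hy
  have hax : a ≤ x := hle V
  have hby : b ≤ y := hle Vᶜ
  have hxy : x + y = 1 := by
    rw [hx, hy, ← ENNReal.ofReal_add (Finset.sum_nonneg (fun v _ => hnn v))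
      (Finset.sum_nonneg (fun v _ => hnn v)), hsum, ENNReal.ofReal_one]
  have hab : (1:ENNReal) ≤ a + b := by
    have : (Set.univ : Set (ℕ → B)) = {Y : ℕ → B | (fun j : Fin L => Y j) ∈ V}
        ∪ {Y : ℕ → B | (fun j : Fin L => Y j) ∈ V}ᶜ := (Set.union_compl_self _).symm
    calc (1:ENNReal) = P Set.univ := measure_univ.symm
      _ ≤ a + b := by rw [this, hcompl]; exact measure_union_le _ _
  refine le_antisymm hax ?_
  have h1 : x + y ≤ a + y := by
    calc x + y = 1 := hxy
      _ ≤ a + b := hab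
      _ ≤ a + y := add_le_add_right hby a
  exact (ENNReal.add_le_add_iff_right ENNReal.ofReal_ne_top).mp h1

/-! ### Word matching indicators -/

def Zf (wb : List B) (i : ℕ) (Y : ℕ → B) : ℝ :=
  if (List.range wb.length).map (fun j => Y (i + j)) = wb then 1 else 0

def Wf (wb : List B) (c : ℕ → ℝ) (p : ℝ) (i : ℕ) (Y : ℕ → B) : ℝ :=
  c i * (Zf wb i Y - p)

def Sf (wb : List B) (c : ℕ → ℝ) (p : ℝ) (N : ℕ) (Y : ℕ → B) : ℝ :=
  ∑ i ∈ Finset.range N, Wf wb c p i Y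

lemma wmeas_eq_prod_getD (ν : B → ℝ) (b₀ : B) (wb : List B) :
    wmeas ν wb = ∏ m ∈ Finset.range wb.length, ν (wb.getD m b₀) := by
  induction wb with
  | nil => simp [wmeas]
  | cons a t ih =>
    have : ∀ m, ((a :: t).getD (m+1) b₀) = t.getD m b₀ := fun m => rfl
    rw [List.length_cons, Finset.prod_range_succ']
    simp only [this, List.getD_cons_zero]
    rw [← ih]
    simp [wmeas]
    ring

lemma wmeas_nonneg (hνpos : ∀ b, 0 < ν b) (wb : List B) : 0 ≤ wmeas ν wb := by
  induction wb with
  | nil => simp [wmeas]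
  | cons a t ih => simpa [wmeas] using mul_nonneg (hνpos a).le (by simpa [wmeas] using ih)

lemma nu_le_one (hνpos : ∀ b, 0 < ν b) (hν1 : ∑ b, ν b = 1) (b : B) : ν b ≤ 1 := by
  rw [← hν1]
  exact Finset.single_le_sum (fun b _ => (hνpos b).le) (Finset.mem_univ b)

lemma wmeas_le_one (hνpos : ∀ b, 0 < ν b) (hν1 : ∑ b, ν b = 1) (wb : List B) :
    wmeas ν wb ≤ 1 := by
  induction wb with
  | nil => simp [wmeas]
  | cons a t ih =>
    have h1 : wmeas ν (a :: t) = ν a * wmeas ν t := by simp [wmeas]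
    rw [h1]
    calc ν a * wmeas ν t ≤ 1 * 1 := by
          apply mul_le_mul (nu_le_one hνpos hν1 a) (by simpa [wmeas] using ih)
            (wmeas_nonneg hνpos t) zero_le_one
      _ = 1 := by ring

lemma Zf_match_iff (wb : List B) (b₀ : B) (i : ℕ) (Y : ℕ → B) :
    ((List.range wb.length).map (fun j => Y (i + j)) = wb)
      ↔ ∀ m ∈ Finset.range wb.length, Y (i + m) = wb.getD m b₀ := by
  constructor
  · intro h m hm
    rw [Finset.mem_range] at hm
    have h2 := congrArg (fun l => l[m]?) h
    simp only [List.getElem?_map, List.getElem?_range hm] at h2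
    rw [List.getD_eq_getElem?_getD, ← h2]
    rfl
  · intro h
    apply List.ext_getElem (by simp)
    intro n h1 h2
    have := h n (by simpa using h2)
    rw [List.getD_eq_getElem wb b₀ h2] at this
    simpa using this
lemma Zf_eq_prod (wb : List B) (b₀ : B) (i : ℕ) (Y : ℕ → B) :
    Zf wb i Y = ∏ m ∈ Finset.range wb.length,
      (if Y (i + m) = wb.getD m b₀ then (1:ℝ) else 0) := by
  rw [Finset.prod_boole, Zf, if_congr (Zf_match_iff wb b₀ i Y) rfl rfl]

lemma Zf_depends (wb : List B) (i : ℕ) :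
    DependsOn' (Zf wb i) (Set.Ico i (i + wb.length)) := by
  intro Y Y' h
  unfold Zf
  have : (List.range wb.length).map (fun j => Y (i + j))
      = (List.range wb.length).map (fun j => Y' (i + j)) := by
    apply List.map_congr_left
    intro j hj
    rw [List.mem_range] at hj
    exact h (i + j) ⟨Nat.le_add_right i j, by omega⟩
  rw [this]

lemma Zf_bdd (wb : List B) (i : ℕ) (Y : ℕ → B) : Zf wb i Y = 0 ∨ Zf wb i Y = 1 := by
  unfold Zf; split <;> simp

lemma EL_Zf (hνpos : ∀ b, 0 < ν b) (hν1 : ∑ b, ν b = 1) (b₀ : B) (wb : List B)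
    {i L : ℕ} (hiL : i + wb.length ≤ L) :
    EL ν b₀ L (Zf wb i) = wmeas ν wb := by
  set k := wb.length with hk
  have h1 : EL ν b₀ L (Zf wb i)
      = EL ν b₀ L (fun Y => ∏ j ∈ Finset.Ico i (i + k),
          (if Y j = wb.getD (j - i) b₀ then (1:ℝ) else 0)) := by
    apply EL_congr
    intro Y
    rw [Zf_eq_prod wb b₀ i Y, Finset.prod_Ico_eq_prod_range]
    simp only [Nat.add_sub_cancel_left]
    rfl
  have h3 := EL_prod_single (ν := ν) hν1 b₀ L (Finset.Ico i (i + k))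
    (fun j hj => by rw [Finset.mem_Ico] at hj; omega)
    (fun j b => if b = wb.getD (j - i) b₀ then (1:ℝ) else 0)
  rw [h1, h3]
  have h2 : ∀ j ∈ Finset.Ico i (i + k),
      (∑ b, ν b * (if b = wb.getD (j - i) b₀ then (1:ℝ) else 0)) = ν (wb.getD (j - i) b₀) := by
    intro j _
    rw [Finset.sum_congr rfl (fun b _ => by rw [mul_ite, mul_one, mul_zero])]
    simp
  rw [Finset.prod_congr rfl h2, Finset.prod_Ico_eq_prod_range]
  simp only [Nat.add_sub_cancel_left]
  rw [wmeas_eq_prod_getD ν b₀ wb]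

lemma Wf_depends (wb : List B) (c : ℕ → ℝ) (p : ℝ) (i : ℕ) :
    DependsOn' (Wf wb c p i) (Set.Ico i (i + wb.length)) := by
  intro Y Y' h
  unfold Wf
  rw [Zf_depends wb i Y Y' h]

lemma Wf_abs_le (wb : List B) (c : ℕ → ℝ) (hc : ∀ i, c i = 0 ∨ c i = 1) {p : ℝ}
    (hp0 : 0 ≤ p) (hp1 : p ≤ 1) (i : ℕ) (Y : ℕ → B) :
    |Wf wb c p i Y| ≤ 1 := by
  unfold Wf
  rw [abs_mul]
  have hci : |c i| ≤ 1 := by rcases hc i with h | h <;> simp [h]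
  have hz : |Zf wb i Y - p| ≤ 1 := by
    rcases Zf_bdd wb i Y with h | h <;> rw [h] <;> rw [abs_le] <;> constructor <;> linarith
  calc |c i| * |Zf wb i Y - p| ≤ 1 * 1 :=
        mul_le_mul hci hz (abs_nonneg _) zero_le_one
    _ = 1 := by ring

lemma EL_Wf (hνpos : ∀ b, 0 < ν b) (hν1 : ∑ b, ν b = 1) (b₀ : B) (wb : List B)
    (c : ℕ → ℝ) {i L : ℕ} (hiL : i + wb.length ≤ L) :
    EL ν b₀ L (Wf wb c (wmeas ν wb) i) = 0 := by
  have h1 : EL ν b₀ L (Wf wb c (wmeas ν wb) i)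
      = c i * EL ν b₀ L (fun Y => Zf wb i Y + (- wmeas ν wb)) := by
    rw [← EL_smul b₀ L (c i) (fun Y => Zf wb i Y + (- wmeas ν wb))]
    apply EL_congr
    intro Y
    unfold Wf
    ring
  rw [h1, EL_add b₀ L (Zf wb i) (fun _ => - wmeas ν wb), EL_Zf hνpos hν1 b₀ wb hiL,
    EL_const hν1]
  ring

/-- If the first index is `k`-separated from the three others, the expectation of the
product of the four `W`'s vanishes. -/
lemma EL_prod4_isolated (hνpos : ∀ b, 0 < ν b) (hν1 : ∑ b, ν b = 1) (b₀ : B)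
    (wb : List B) (c : ℕ → ℝ) {i1 i2 i3 i4 L : ℕ}
    (h1L : i1 + wb.length ≤ L)
    (h2 : i2 + wb.length ≤ i1 ∨ i1 + wb.length ≤ i2)
    (h3 : i3 + wb.length ≤ i1 ∨ i1 + wb.length ≤ i3)
    (h4 : i4 + wb.length ≤ i1 ∨ i1 + wb.length ≤ i4) :
    EL ν b₀ L (fun Y => Wf wb c (wmeas ν wb) i1 Y *
      (Wf wb c (wmeas ν wb) i2 Y * Wf wb c (wmeas ν wb) i3 Y * Wf wb c (wmeas ν wb) i4 Y))
      = 0 := by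
  classical
  set k := wb.length with hk
  set s : Set ℕ := Set.Ico i1 (i1 + k) with hs
  have hsub : ∀ {j : ℕ}, (j + k ≤ i1 ∨ i1 + k ≤ j) → Set.Ico j (j + k) ⊆ sᶜ := by
    intro j hj x hx
    simp only [hs, Set.mem_compl_iff, Set.mem_Ico, not_and, not_lt]
    simp only [Set.mem_Ico] at hx
    omega
  have hg : DependsOn' (fun Y => Wf wb c (wmeas ν wb) i2 Y * Wf wb c (wmeas ν wb) i3 Y
      * Wf wb c (wmeas ν wb) i4 Y) sᶜ := by
    apply DependsOn'.mul
    apply DependsOn'.mul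
    · exact (Wf_depends wb c _ i2).mono (hsub h2)
    · exact (Wf_depends wb c _ i3).mono (hsub h3)
    · exact (Wf_depends wb c _ i4).mono (hsub h4)
  rw [EL_mul_indep hν1 b₀ L _ _ s (Wf_depends wb c _ i1) hg,
    EL_Wf hνpos hν1 b₀ wb c h1L, zero_mul]

lemma notclose_card (N k : ℕ) (f : (ℕ × ℕ) × ℕ × ℕ → ((ℕ × ℕ) × ℕ × ℕ))
    (F : Finset ((ℕ × ℕ) × ℕ × ℕ))
    (hmaps : ∀ q ∈ F, f q ∈ ((Finset.range N ×ˢ Finset.range (2 * k)) ×ˢ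
      (Finset.range N ×ˢ Finset.range (2 * k))))
    (hinj : Set.InjOn f F) : F.card ≤ N * (2 * k) * (N * (2 * k)) := by
  calc F.card ≤ ((Finset.range N ×ˢ Finset.range (2 * k)) ×ˢ
      (Finset.range N ×ˢ Finset.range (2 * k))).card := Finset.card_le_card_of_injOn f hmaps hinj
    _ = N * (2 * k) * (N * (2 * k)) := by simp [Finset.card_product, mul_assoc]


def clp (k x y : ℕ) : Prop := x < y + k ∧ y < x + k

instance clp_dec (k x y : ℕ) : Decidable (clp k x y) := by unfold clp; infer_instance

def BadQ (k : ℕ) (q : (ℕ × ℕ) × ℕ × ℕ) : Prop :=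
  (clp k q.1.1 q.1.2 ∨ clp k q.1.1 q.2.1 ∨ clp k q.1.1 q.2.2) ∧
  (clp k q.1.2 q.1.1 ∨ clp k q.1.2 q.2.1 ∨ clp k q.1.2 q.2.2) ∧
  (clp k q.2.1 q.1.1 ∨ clp k q.2.1 q.1.2 ∨ clp k q.2.1 q.2.2) ∧
  (clp k q.2.2 q.1.1 ∨ clp k q.2.2 q.1.2 ∨ clp k q.2.2 q.2.1)

instance BadQ_dec (k : ℕ) (q : (ℕ × ℕ) × ℕ × ℕ) : Decidable (BadQ k q) := by
  unfold BadQ; infer_instance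

lemma card_badQ_le (N k : ℕ) :
    ((((Finset.range N ×ˢ Finset.range N) ×ˢ (Finset.range N ×ˢ Finset.range N)).filter
      (BadQ k)).card : ℕ) ≤ 12 * k^2 * N^2 := by
  classical
  set Q : Finset ((ℕ × ℕ) × ℕ × ℕ) :=
    (Finset.range N ×ˢ Finset.range N) ×ˢ (Finset.range N ×ˢ Finset.range N) with hQ
  set F1 := Q.filter (fun q : (ℕ × ℕ) × ℕ × ℕ => clp k q.1.1 q.1.2 ∧ clp k q.2.1 q.2.2) with hF1
  set F2 := Q.filter (fun q : (ℕ × ℕ) × ℕ × ℕ => clp k q.1.1 q.2.1 ∧ clp k q.1.2 q.2.2) with hF2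
  set F3 := Q.filter (fun q : (ℕ × ℕ) × ℕ × ℕ => clp k q.1.1 q.2.2 ∧ clp k q.1.2 q.2.1) with hF3
  have hsub : Q.filter (BadQ k) ⊆ F1 ∪ F2 ∪ F3 := by
    rintro ⟨⟨a, b⟩, cc, d⟩ hq
    rw [Finset.mem_filter] at hq
    obtain ⟨hqQ, hbad⟩ := hq
    unfold BadQ clp at hbad
    dsimp only at hbad
    have hky : (a < b + k ∧ b < a + k) ∧ (cc < d + k ∧ d < cc + k)
        ∨ (a < cc + k ∧ cc < a + k) ∧ (b < d + k ∧ d < b + k)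
        ∨ (a < d + k ∧ d < a + k) ∧ (b < cc + k ∧ cc < b + k) := by omega
    have mkc : ∀ x y : ℕ, x < y + k ∧ y < x + k → clp k x y := fun _ _ h => h
    rcases hky with h | h | h
    · exact Finset.mem_union_left _ (Finset.mem_union_left _
        (Finset.mem_filter.mpr ⟨hqQ, mkc _ _ h.1, mkc _ _ h.2⟩))
    · exact Finset.mem_union_left _ (Finset.mem_union_right _
        (Finset.mem_filter.mpr ⟨hqQ, mkc _ _ h.1, mkc _ _ h.2⟩))
    · exact Finset.mem_union_right _
        (Finset.mem_filter.mpr ⟨hqQ, mkc _ _ h.1, mkc _ _ h.2⟩)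
  have c1 : F1.card ≤ N * (2 * k) * (N * (2 * k)) := by
    apply notclose_card N k (fun q => ((q.1.1, q.1.2 + k - q.1.1), (q.2.1, q.2.2 + k - q.2.1)))
    · rintro ⟨⟨a, b⟩, cc, d⟩ hq
      simp only [hF1, hQ, Finset.mem_filter, Finset.mem_product, Finset.mem_range] at hq ⊢
      unfold clp at hq
      omega
    · rintro ⟨⟨a, b⟩, cc, d⟩ hq ⟨⟨a', b'⟩, cc', d'⟩ hq' heq
      simp only [hF1, hQ, Finset.coe_filter, Finset.mem_product, Finset.mem_range,
        Set.mem_setOf_eq] at hq hq'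
      unfold clp at hq hq'
      simp only [Prod.mk.injEq] at heq ⊢
      omega
  have c2 : F2.card ≤ N * (2 * k) * (N * (2 * k)) := by
    apply notclose_card N k (fun q => ((q.1.1, q.2.1 + k - q.1.1), (q.1.2, q.2.2 + k - q.1.2)))
    · rintro ⟨⟨a, b⟩, cc, d⟩ hq
      simp only [hF2, hQ, Finset.mem_filter, Finset.mem_product, Finset.mem_range] at hq ⊢
      unfold clp at hq
      omega
    · rintro ⟨⟨a, b⟩, cc, d⟩ hq ⟨⟨a', b'⟩, cc', d'⟩ hq' heq
      simp only [hF2, hQ, Finset.coe_filter, Finset.mem_product, Finset.mem_range,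
        Set.mem_setOf_eq] at hq hq'
      unfold clp at hq hq'
      simp only [Prod.mk.injEq] at heq ⊢
      omega
  have c3 : F3.card ≤ N * (2 * k) * (N * (2 * k)) := by
    apply notclose_card N k (fun q => ((q.1.1, q.2.2 + k - q.1.1), (q.1.2, q.2.1 + k - q.1.2)))
    · rintro ⟨⟨a, b⟩, cc, d⟩ hq
      simp only [hF3, hQ, Finset.mem_filter, Finset.mem_product, Finset.mem_range] at hq ⊢
      unfold clp at hq
      omega
    · rintro ⟨⟨a, b⟩, cc, d⟩ hq ⟨⟨a', b'⟩, cc', d'⟩ hq' heq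
      simp only [hF3, hQ, Finset.coe_filter, Finset.mem_product, Finset.mem_range,
        Set.mem_setOf_eq] at hq hq'
      unfold clp at hq hq'
      simp only [Prod.mk.injEq] at heq ⊢
      omega
  calc (Q.filter (BadQ k)).card ≤ (F1 ∪ F2 ∪ F3).card := Finset.card_le_card hsub
    _ ≤ (F1 ∪ F2).card + F3.card := Finset.card_union_le _ _
    _ ≤ F1.card + F2.card + F3.card := add_le_add_left (Finset.card_union_le _ _) _
    _ ≤ 12 * k^2 * N^2 := by nlinarith [c1, c2, c3]

/-- Fourth moment bound for `Sf`. -/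
lemma EL_S4_le (hνpos : ∀ b, 0 < ν b) (hν1 : ∑ b, ν b = 1) (b₀ : B) (wb : List B)
    (c : ℕ → ℝ) (hc : ∀ i, c i = 0 ∨ c i = 1) (N : ℕ) :
    EL ν b₀ (N + wb.length) (fun Y => (Sf wb c (wmeas ν wb) N Y)^4)
      ≤ 12 * (wb.length : ℝ)^2 * (N : ℝ)^2 := by
  classical
  set k := wb.length with hk
  set L := N + k with hL
  set p := wmeas ν wb with hp
  have hp0 : 0 ≤ p := wmeas_nonneg hνpos wb
  have hp1 : p ≤ 1 := wmeas_le_one hνpos hν1 wb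
  set W : ℕ → (ℕ → B) → ℝ := Wf wb c p with hW
  set T : ℕ → ℕ → ℕ → ℕ → ℝ :=
    fun i1 i2 i3 i4 => EL ν b₀ L (fun Y => W i1 Y * (W i2 Y * W i3 Y * W i4 Y)) with hT
  -- expansion
  have expand : EL ν b₀ L (fun Y => (Sf wb c p N Y)^4)
      = ∑ i1 ∈ Finset.range N, ∑ i2 ∈ Finset.range N, ∑ i3 ∈ Finset.range N,
        ∑ i4 ∈ Finset.range N, T i1 i2 i3 i4 := by
    have e1 : ∀ Y, (Sf wb c p N Y)^4
        = ∑ i1 ∈ Finset.range N, ∑ i2 ∈ Finset.range N, ∑ i3 ∈ Finset.range N,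
          ∑ i4 ∈ Finset.range N, W i1 Y * (W i2 Y * W i3 Y * W i4 Y) := by
      intro Y
      unfold Sf
      rw [show ((∑ i ∈ Finset.range N, Wf wb c p i Y)^4
          = (∑ i ∈ Finset.range N, W i Y) * ((∑ i ∈ Finset.range N, W i Y) *
            ((∑ i ∈ Finset.range N, W i Y) * (∑ i ∈ Finset.range N, W i Y)))) from by
          rw [hW]; ring]
      simp only [Finset.sum_mul, Finset.mul_sum]
      refine Finset.sum_congr rfl (fun i1 _ => Finset.sum_congr rfl (fun i2 _ =>
        Finset.sum_congr rfl (fun i3 _ => Finset.sum_congr rfl (fun i4 _ => by ring))))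
    rw [EL_congr e1, EL_sum]
    refine Finset.sum_congr rfl (fun i1 _ => ?_)
    rw [EL_sum]
    refine Finset.sum_congr rfl (fun i2 _ => ?_)
    rw [EL_sum]
    refine Finset.sum_congr rfl (fun i3 _ => ?_)
    rw [EL_sum]
  -- per-term bounds
  have Tbd : ∀ i1 i2 i3 i4, |T i1 i2 i3 i4| ≤ 1 := by
    intro i1 i2 i3 i4
    apply EL_abs_le hνpos hν1
    intro Y
    have b1 := Wf_abs_le wb c hc hp0 hp1 i1 Y
    have b2 := Wf_abs_le wb c hc hp0 hp1 i2 Y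
    have b3 := Wf_abs_le wb c hc hp0 hp1 i3 Y
    have b4 := Wf_abs_le wb c hc hp0 hp1 i4 Y
    have h34 : |W i2 Y| * |W i3 Y| ≤ 1 := mul_le_one₀ b2 (abs_nonneg _) b3
    have h234 : |W i2 Y| * |W i3 Y| * |W i4 Y| ≤ 1 := mul_le_one₀ h34 (abs_nonneg _) b4
    rw [abs_mul, abs_mul, abs_mul]
    exact mul_le_one₀ b1 (by positivity) h234
  have Tiso : ∀ i1 i2 i3 i4, i1 < N → i2 < N → i3 < N → i4 < N →
      ((i2 + k ≤ i1 ∨ i1 + k ≤ i2) ∧ (i3 + k ≤ i1 ∨ i1 + k ≤ i3) ∧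
        (i4 + k ≤ i1 ∨ i1 + k ≤ i4)) → T i1 i2 i3 i4 = 0 := by
    intro i1 i2 i3 i4 hN1 _ _ _ ⟨ha, hb, hcc⟩
    exact EL_prod4_isolated hνpos hν1 b₀ wb c (by omega) ha hb hcc
  -- reshaping as a sum over quadruples
  set Q : Finset ((ℕ × ℕ) × ℕ × ℕ) :=
    (Finset.range N ×ˢ Finset.range N) ×ˢ (Finset.range N ×ˢ Finset.range N) with hQ
  have sumQ : ∑ i1 ∈ Finset.range N, ∑ i2 ∈ Finset.range N, ∑ i3 ∈ Finset.range N,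
        ∑ i4 ∈ Finset.range N, T i1 i2 i3 i4
      = ∑ q ∈ Q, T q.1.1 q.1.2 q.2.1 q.2.2 := by
    rw [hQ]
    simp only [Finset.sum_product]
  have Tsym : ∀ q ∈ Q, ¬ BadQ k q → T q.1.1 q.1.2 q.2.1 q.2.2 = 0 := by
    rintro ⟨⟨a, b⟩, cc, d⟩ hq hnb
    simp only [hQ, Finset.mem_product, Finset.mem_range] at hq
    obtain ⟨⟨haN, hbN⟩, hcN, hdN⟩ := hq
    unfold BadQ at hnb
    rw [not_and_or, not_and_or, not_and_or] at hnb
    have notcl : ∀ x y : ℕ, ¬ clp k x y → (y + k ≤ x ∨ x + k ≤ y) := by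
      intro x y h
      unfold clp at h
      omega
    rcases hnb with h | h | h | h
    · push_neg at h
      obtain ⟨h1, h2, h3⟩ := h
      exact Tiso a b cc d haN hbN hcN hdN ⟨notcl _ _ h1, notcl _ _ h2, notcl _ _ h3⟩
    · push_neg at h
      obtain ⟨h1, h2, h3⟩ := h
      have he : T a b cc d = EL ν b₀ L (fun Y => W b Y * (W a Y * W cc Y * W d Y)) := by
        apply EL_congr; intro Y; ring
      rw [he]
      exact EL_prod4_isolated hνpos hν1 b₀ wb c (by omega)
        (notcl _ _ h1) (notcl _ _ h2) (notcl _ _ h3)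
    · push_neg at h
      obtain ⟨h1, h2, h3⟩ := h
      have he : T a b cc d = EL ν b₀ L (fun Y => W cc Y * (W a Y * W b Y * W d Y)) := by
        apply EL_congr; intro Y; ring
      rw [he]
      exact EL_prod4_isolated hνpos hν1 b₀ wb c (by omega)
        (notcl _ _ h1) (notcl _ _ h2) (notcl _ _ h3)
    · push_neg at h
      obtain ⟨h1, h2, h3⟩ := h
      have he : T a b cc d = EL ν b₀ L (fun Y => W d Y * (W a Y * W b Y * W cc Y)) := by
        apply EL_congr; intro Y; ring
      rw [he]
      exact EL_prod4_isolated hνpos hν1 b₀ wb c (by omega)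
        (notcl _ _ h1) (notcl _ _ h2) (notcl _ _ h3)
  have sumBad : ∑ q ∈ Q, T q.1.1 q.1.2 q.2.1 q.2.2
      = ∑ q ∈ Q.filter (BadQ k), T q.1.1 q.1.2 q.2.1 q.2.2 := by
    symm
    apply Finset.sum_subset (Finset.filter_subset _ _)
    intro q hq hq'
    apply Tsym q hq
    intro hb
    exact hq' (Finset.mem_filter.mpr ⟨hq, hb⟩)
  have cardBad : (Q.filter (BadQ k)).card ≤ 12 * k^2 * N^2 := card_badQ_le N k
  -- put everything together
  rw [expand, sumQ, sumBad]
  calc ∑ q ∈ Q.filter (BadQ k), T q.1.1 q.1.2 q.2.1 q.2.2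
      ≤ ∑ q ∈ Q.filter (BadQ k), (1:ℝ) := by
        apply Finset.sum_le_sum
        intro q _
        exact le_trans (le_abs_self _) (Tbd _ _ _ _)
    _ = (((Q.filter (BadQ k)).card : ℕ) : ℝ) := by simp
    _ ≤ ((12 * k^2 * N^2 : ℕ) : ℝ) := by exact_mod_cast cardBad
    _ = 12 * (k : ℝ)^2 * (N : ℝ)^2 := by push_cast; ring

lemma Sf_restr (b₀ : B) (wb : List B) (c : ℕ → ℝ) (p : ℝ) (N : ℕ) (Y : ℕ → B) :
    Sf wb c p N (extFn b₀ (N + wb.length) (fun j : Fin (N + wb.length) => Y j))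
      = Sf wb c p N Y := by
  unfold Sf
  refine Finset.sum_congr rfl (fun i hi => ?_)
  rw [Finset.mem_range] at hi
  apply Wf_depends wb c p i
  intro x hx
  simp only [Set.mem_Ico] at hx
  have hxL : x < N + wb.length := by omega
  simp [extFn, hxL]

/-- Chebyshev bound for the deviation event. -/
lemma prob_bad_le (hνpos : ∀ b, 0 < ν b) (hν1 : ∑ b, ν b = 1)
    [MeasurableSpace B] (P : Measure (ℕ → B)) [IsProbabilityMeasure P]
    (hP : ∀ v : List B, P {Y | pref Y v.length = v} = ENNReal.ofReal (wmeas ν v))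
    (b₀ : B) (wb : List B) (c : ℕ → ℝ) (hc : ∀ i, c i = 0 ∨ c i = 1) (t : ℕ)
    {N : ℕ} (hN : 1 ≤ N) :
    P {Y : ℕ → B | (N : ℝ) ≤ (t + 1) * |Sf wb c (wmeas ν wb) N Y|}
      ≤ ENNReal.ofReal (12 * (wb.length : ℝ)^2 * (t + 1)^4 / N^2) := by
  classical
  set k := wb.length with hk
  set L := N + k with hL
  set p := wmeas ν wb with hp
  set V : Finset (Fin L → B) := Finset.univ.filter
    (fun v => (N : ℝ) ≤ (t + 1) * |Sf wb c p N (extFn b₀ L v)|) with hV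
  have hset : {Y : ℕ → B | (N : ℝ) ≤ (t + 1) * |Sf wb c p N Y|}
      = {Y : ℕ → B | (fun j : Fin L => Y j) ∈ V} := by
    ext Y
    simp only [Set.mem_setOf_eq, hV, Finset.mem_filter, Finset.mem_univ, true_and]
    rw [Sf_restr b₀ wb c p N Y]
  rw [hset, measure_event hνpos hν1 P hP L V]
  apply ENNReal.ofReal_le_ofReal
  have hNpos : (0:ℝ) < N := by exact_mod_cast hN
  have habs : ∀ x : ℝ, |x|^4 = x^4 := by
    intro x
    rw [pow_abs, abs_of_nonneg (by positivity)]
  have hstep : ∀ v ∈ V, (∏ j, ν (v j))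
      ≤ (∏ j, ν (v j)) * ((t + 1)^4 * (Sf wb c p N (extFn b₀ L v))^4 / N^4) := by
    intro v hv
    rw [hV, Finset.mem_filter] at hv
    have h1 : (N : ℝ)^4 ≤ ((t + 1) * |Sf wb c p N (extFn b₀ L v)|)^4 :=
      pow_le_pow_left₀ hNpos.le hv.2 4
    have h2 : (1:ℝ) ≤ (t + 1)^4 * (Sf wb c p N (extFn b₀ L v))^4 / N^4 := by
      rw [one_le_div (by positivity)]
      calc (N:ℝ)^4 ≤ ((t + 1) * |Sf wb c p N (extFn b₀ L v)|)^4 := h1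
        _ = (t + 1)^4 * (Sf wb c p N (extFn b₀ L v))^4 := by
            rw [mul_pow, habs]
    nlinarith [Finset.prod_nonneg (fun j (_ : j ∈ Finset.univ) => (hνpos (v j)).le)]
  calc ∑ v ∈ V, ∏ j, ν (v j)
      ≤ ∑ v ∈ V, (∏ j, ν (v j)) * ((t + 1)^4 * (Sf wb c p N (extFn b₀ L v))^4 / N^4) :=
        Finset.sum_le_sum hstep
    _ ≤ ∑ v : Fin L → B, (∏ j, ν (v j)) * ((t + 1)^4 * (Sf wb c p N (extFn b₀ L v))^4 / N^4) := by
        apply Finset.sum_le_sum_of_subset_of_nonneg (Finset.subset_univ V)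
        intro v _ _
        have := Finset.prod_nonneg (fun j (_ : j ∈ Finset.univ) => (hνpos (v j)).le)
        positivity
    _ = ((t + 1)^4 / N^4) * ∑ v : Fin L → B, (∏ j, ν (v j)) * (Sf wb c p N (extFn b₀ L v))^4 := by
        rw [Finset.mul_sum]
        exact Finset.sum_congr rfl (fun v _ => by ring)
    _ = ((t + 1)^4 / N^4) * EL ν b₀ L (fun Y => (Sf wb c p N Y)^4) := rfl
    _ ≤ ((t + 1)^4 / N^4) * (12 * (k : ℝ)^2 * (N : ℝ)^2) := by
        apply mul_le_mul_of_nonneg_left (EL_S4_le hνpos hν1 b₀ wb c hc N) (by positivity)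
    _ = 12 * (k : ℝ)^2 * (t + 1)^4 / N^2 := by
        rw [show ((N:ℝ)^4 = N^2 * N^2) from by ring]
        field_simp

/-- Almost surely, `Sf N / N → 0`. -/
lemma as_tendsto_S (hνpos : ∀ b, 0 < ν b) (hν1 : ∑ b, ν b = 1)
    [MeasurableSpace B] (P : Measure (ℕ → B)) [IsProbabilityMeasure P]
    (hP : ∀ v : List B, P {Y | pref Y v.length = v} = ENNReal.ofReal (wmeas ν v))
    (b₀ : B) (wb : List B) (c : ℕ → ℝ) (hc : ∀ i, c i = 0 ∨ c i = 1) :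
    ∀ᵐ Y ∂P, Tendsto (fun N : ℕ => Sf wb c (wmeas ν wb) N Y / (N : ℝ)) atTop (𝓝 0) := by
  classical
  set p := wmeas ν wb with hp
  set k := wb.length with hk
  have key : ∀ t : ℕ, ∀ᵐ Y ∂P, ∀ᶠ N : ℕ in atTop,
      Y ∉ {Y : ℕ → B | (N : ℝ) ≤ (t + 1) * |Sf wb c p N Y|} := by
    intro t
    apply ae_eventually_notMem
    set C := 12 * (k : ℝ)^2 * (t + 1)^4 with hC
    have hC0 : 0 ≤ C := by positivity
    have hsum : ∀ N : ℕ, P {Y : ℕ → B | (N : ℝ) ≤ (t + 1) * |Sf wb c p N Y|}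
        ≤ (if N = 0 then 1 else 0) + ENNReal.ofReal (C / N^2) := by
      intro N
      rcases Nat.eq_zero_or_pos N with h0 | hpos
      · subst h0
        simp only [if_pos rfl]
        calc P _ ≤ 1 := prob_le_one
          _ ≤ 1 + ENNReal.ofReal (C / (0:ℕ)^2) := le_self_add
      · rw [if_neg (by omega)]
        calc P {Y : ℕ → B | (N : ℝ) ≤ (t + 1) * |Sf wb c p N Y|}
            ≤ ENNReal.ofReal (C / N^2) := prob_bad_le hνpos hν1 P hP b₀ wb c hc t hpos
          _ ≤ 0 + ENNReal.ofReal (C / N^2) := by rw [zero_add]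
    have hsummable : Summable (fun N : ℕ => C / (N:ℝ)^2) := by
      have h1 : Summable (fun N : ℕ => (1:ℝ) / (N:ℝ)^2) :=
        Real.summable_one_div_nat_pow.mpr one_lt_two
      have h2 := h1.mul_left C
      apply h2.congr
      intro N
      ring
    apply ne_top_of_le_ne_top
      (show (1 + ENNReal.ofReal (∑' N : ℕ, C / N^2)) ≠ ⊤ from
        ENNReal.add_ne_top.mpr ⟨ENNReal.one_ne_top, ENNReal.ofReal_ne_top⟩)
    calc ∑' N : ℕ, P {Y : ℕ → B | (N : ℝ) ≤ (t + 1) * |Sf wb c p N Y|}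
        ≤ ∑' N : ℕ, ((if N = 0 then 1 else 0) + ENNReal.ofReal (C / N^2)) :=
          ENNReal.tsum_le_tsum hsum
      _ = (∑' N : ℕ, (if N = 0 then (1:ENNReal) else 0)) + ∑' N : ℕ, ENNReal.ofReal (C / N^2) :=
          ENNReal.tsum_add
      _ = 1 + ENNReal.ofReal (∑' N : ℕ, C / N^2) := by
          congr 1
          · rw [tsum_eq_single 0 (fun b hb => by rw [if_neg hb])]
            simp
          · rw [ENNReal.ofReal_tsum_of_nonneg (fun N => by positivity) hsummable]
  have hall : ∀ᵐ Y ∂P, ∀ t : ℕ, ∀ᶠ N : ℕ in atTop,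
      Y ∉ {Y : ℕ → B | (N : ℝ) ≤ (t + 1) * |Sf wb c p N Y|} := ae_all_iff.mpr key
  filter_upwards [hall] with Y hY
  rw [Metric.tendsto_atTop]
  intro ε hε
  obtain ⟨t, ht⟩ := exists_nat_one_div_lt hε
  have hev : ∀ᶠ N : ℕ in atTop, (N ≥ 1 ∧
      Y ∉ {Y : ℕ → B | (N : ℝ) ≤ (t + 1) * |Sf wb c p N Y|}) :=
    (eventually_ge_atTop 1).and (hY t)
  obtain ⟨N₀, hN₀⟩ := eventually_atTop.mp hev
  refine ⟨N₀, fun n hn => ?_⟩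
  obtain ⟨hn1, hn2⟩ := hN₀ n hn
  simp only [Set.mem_setOf_eq, not_le] at hn2
  have hnpos : (0:ℝ) < n := by exact_mod_cast hn1
  rw [Real.dist_eq, sub_zero, abs_div, abs_of_nonneg hnpos.le]
  have ht1 : (0:ℝ) < t + 1 := by positivity
  calc |Sf wb c p n Y| / n < 1 / (t + 1) := by
        rw [div_lt_div_iff₀ hnpos ht1]
        nlinarith [hn2]
    _ < ε := ht

lemma map_pair_eq_iff {A : Type*} (f : ℕ → A) (g : ℕ → B) (l : List ℕ) (w : List (A × B)) :
    l.map (fun j => (f j, g j)) = w ↔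
      (l.map f = w.map Prod.fst ∧ l.map g = w.map Prod.snd) := by
  induction l generalizing w with
  | nil => cases w <;> simp
  | cons a l ih =>
    cases w with
    | nil => simp
    | cons q w =>
      simp only [List.map_cons, List.cons.injEq, ih w, Prod.ext_iff]
      tauto

lemma wmeas_join {A : Type*} (μ : A → ℝ) (ν : B → ℝ) (w : List (A × B)) :
    wmeas (fun pr : A × B => μ pr.1 * ν pr.2) w
      = wmeas μ (w.map Prod.fst) * wmeas ν (w.map Prod.snd) := by
  induction w with
  | nil => simp [wmeas]
  | cons q w ih =>
    simp only [wmeas, List.map_cons, List.prod_cons] at ih ⊢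
    rw [ih]
    ring

end RJN

open RJN

/-- if `X` is `μ`-normal and `Y` is drawn according to the Bernoulli
product measure induced by `ν` on `B^ω` (characterized by its values on cylinders),
then almost surely the joined sequence `X ⊗ Y` is `(μ ⊗ ν)`-normal. -/
theorem random_join_normal
    {A B : Type*} [Fintype A] [DecidableEq A] [Fintype B] [DecidableEq B]
    [MeasurableSpace B]
    (μ : A → ℝ) (ν : B → ℝ) (hμpos : ∀ a, 0 < μ a) (hνpos : ∀ b, 0 < ν b)
    (hμsum : ∑ a, μ a = 1) (hνsum : ∑ b, ν b = 1)
    (X : ℕ → A) (hX : BNormal μ X)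
    (P : Measure (ℕ → B)) [IsProbabilityMeasure P]
    (hP : ∀ v : List B, P {Y | pref Y v.length = v} = ENNReal.ofReal (wmeas ν v)) :
    ∀ᵐ Y ∂P, BNormal (fun p : A × B => μ p.1 * ν p.2) (fun n => (X n, Y n)) := by
  classical
  have hBne : Nonempty B := by
    by_contra h
    have hempty : (Set.univ : Set (ℕ → B)) = ∅ := by
      ext Y
      exact absurd ⟨Y 0⟩ h
    have h1 : P Set.univ = 1 := measure_univ
    rw [hempty] at h1
    simp at h1
  obtain ⟨b₀⟩ := hBne
  have main : ∀ w : List (A × B), ∀ᵐ Y ∂P, w ≠ [] →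
      Tendsto (fun n => freq w (fun m => (X m, Y m)) n) atTop
        (𝓝 (wmeas (fun pr : A × B => μ pr.1 * ν pr.2) w)) := by
    intro w
    rcases eq_or_ne w [] with rfl | hw
    · filter_upwards with Y hne
      exact absurd rfl hne
    set k := w.length with hk
    set wa := w.map Prod.fst with hwa
    set wb := w.map Prod.snd with hwb
    have hwane : wa ≠ [] := by simpa [hwa] using hw
    have hlwa : wa.length = k := by simp [hwa, hk]
    have hlwb : wb.length = k := by simp [hwb, hk]
    set c : ℕ → ℝ := fun i =>
      if (List.range wa.length).map (fun j => X (i + j)) = wa then 1 else 0 with hc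
    have hcb : ∀ i, c i = 0 ∨ c i = 1 := by
      intro i
      by_cases h : (List.range wa.length).map (fun j => X (i + j)) = wa
      · right; simp [hc, h]
      · left; simp [hc, h]
    set p := wmeas ν wb with hp
    have hS := RJN.as_tendsto_S (ν := ν) hνpos hνsum P hP b₀ wb c hcb
    filter_upwards [hS] with Y hY _
    -- the occurrence-count identity
    have ident : ∀ n : ℕ, freq w (fun m => (X m, Y m)) n
        = RJN.Sf wb c p (n + 2 - k) Y / ((n + 2 - k : ℕ) : ℝ) + p * freq wa X n := by
      intro n
      set N := n + 2 - k with hN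
      have hocc : ((nbocc w (fun m => (X m, Y m)) n : ℕ) : ℝ)
          = ∑ i ∈ Finset.range N, c i * RJN.Zf wb i Y := by
        rw [nbocc, ← hk, ← hN, ← Finset.sum_boole]
        refine Finset.sum_congr rfl (fun i _ => ?_)
        have hiff : ((List.range w.length).map (fun j => (X (i + j), Y (i + j))) = w)
            ↔ ((List.range w.length).map (fun j => X (i + j)) = wa
              ∧ (List.range w.length).map (fun j => Y (i + j)) = wb) :=
          map_pair_eq_iff (fun j => X (i + j)) (fun j => Y (i + j)) (List.range w.length) w
        rw [if_congr hiff rfl rfl, hc, RJN.Zf, hlwa, hlwb, ← hk]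
        by_cases h1 : (List.range k).map (fun j => X (i + j)) = wa <;>
          by_cases h2 : (List.range k).map (fun j => Y (i + j)) = wb <;>
          simp [h1, h2]
      have hocca : ((nbocc wa X n : ℕ) : ℝ) = ∑ i ∈ Finset.range N, c i := by
        rw [nbocc, hlwa, ← hN, ← Finset.sum_boole]
        refine Finset.sum_congr rfl (fun i _ => ?_)
        simp only [hc, hlwa]
      have hsplit : ∑ i ∈ Finset.range N, c i * RJN.Zf wb i Y
          = RJN.Sf wb c p N Y + p * ∑ i ∈ Finset.range N, c i := by
        rw [RJN.Sf, Finset.mul_sum, ← Finset.sum_add_distrib]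
        refine Finset.sum_congr rfl (fun i _ => ?_)
        rw [RJN.Wf]
        ring
      rw [freq, freq, hlwa, ← hk, ← hN, hocc, hsplit, hocca, add_div, mul_div_assoc]
    have hNtend : Tendsto (fun n : ℕ => n + 2 - k) atTop atTop := by
      rw [tendsto_atTop]
      intro b
      rw [eventually_atTop]
      exact ⟨b + k, fun n hn => by omega⟩
    have h1 : Tendsto (fun n : ℕ => RJN.Sf wb c p (n + 2 - k) Y / ((n + 2 - k : ℕ) : ℝ))
        atTop (𝓝 0) := hY.comp hNtend
    have h2 : Tendsto (fun n => p * freq wa X n) atTop (𝓝 (p * wmeas μ wa)) :=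
      (hX wa hwane).const_mul p
    have hlim := h1.add h2
    rw [zero_add] at hlim
    have hval : p * wmeas μ wa = wmeas (fun pr : A × B => μ pr.1 * ν pr.2) w := by
      rw [wmeas_join μ ν w, ← hwa, ← hwb, hp]
      ring
    rw [hval] at hlim
    exact hlim.congr (fun n => (ident n).symm)
  have hall : ∀ᵐ Y ∂P, ∀ w : List (A × B), w ≠ [] →
      Tendsto (fun n => freq w (fun m => (X m, Y m)) n) atTop
        (𝓝 (wmeas (fun pr : A × B => μ pr.1 * ν pr.2) w)) := ae_all_iff.mpr main
  filter_upwards [hall] with Y hY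
  intro w hw
  exact hY w hw
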